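/- Let u be a strongly continuous one-parameter group of unitaries on a Hilbert space H (or, more generally, a Hilbert C*-module E), and let z ∈ iℝ be purely imaginary. Then the analytic continuation u_z is symmetric: for all a, b ∈ D(u_z), ⟨u_z(a), b⟩ = ⟨a, u_z(b)⟩, i.e. u_z ⊆ (u_z)*. -/

import Mathlib

open Complex MeasureTheory Filter Topology Set

noncomputable section

/-- The closed horizontal strip between the real axis and the line `Im = z.im`. -/
def hStrip (z : ℂ) : Set ℂ := {y : ℂ | y.im ∈ Set.uIcc 0 z.im}

/-- A strongly continuous one-parameter (contractive, hence isometric) representation. -/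
structure IsOneParamRep {E : Type*} [NormedAddCommGroup E] [NormedSpace ℂ E]
    (α : ℝ → E →L[ℂ] E) : Prop where
  map_add : ∀ s t : ℝ, α (s + t) = (α s).comp (α t)
  map_zero : α 0 = ContinuousLinearMap.id ℂ E
  norm_le : ∀ t : ℝ, ‖α t‖ ≤ 1
  strong_cont : ∀ a : E, Continuous fun t : ℝ => α t a

/-- `(a, b)` lies in the graph of the analytic continuation `α_z`:  there is a function `f`,
continuous on the strip `S(z)`, analytic in its interior, agreeing with `t ↦ α_t a` on `ℝ`,
with `f z = b`. -/
def HasContVal {E : Type*} [NormedAddCommGroup E] [NormedSpace ℂ E]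
    (α : ℝ → E →L[ℂ] E) (z : ℂ) (a b : E) : Prop :=
  ∃ f : ℂ → E, ContinuousOn f (hStrip z) ∧
    DifferentiableOn ℂ f (interior (hStrip z)) ∧
    (∀ t : ℝ, f t = α t a) ∧ f z = b

lemma hStrip_eq (z : ℂ) : hStrip z = Set.univ ×ℂ Set.uIcc 0 z.im := by
  ext w; simp [hStrip, Complex.mem_reProdIm]

lemma interior_hStrip (z : ℂ) :
    interior (hStrip z) = Set.univ ×ℂ Set.Ioo (min 0 z.im) (max 0 z.im) := by
  rw [hStrip_eq, Complex.interior_reProdIm, interior_univ, Set.uIcc, interior_Icc]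

lemma mem_interior_hStrip {z w : ℂ} :
    w ∈ interior (hStrip z) ↔ w.im ∈ Set.Ioo (min 0 z.im) (max 0 z.im) := by
  rw [interior_hStrip]; simp [Complex.mem_reProdIm]

lemma hasDerivAt_conj_comp {G : ℂ → ℂ} {d w : ℂ}
    (h : HasDerivAt G d ((starRingEnd ℂ) w)) :
    HasDerivAt (fun y => (starRingEnd ℂ) (G ((starRingEnd ℂ) y))) ((starRingEnd ℂ) d) w := by
  rw [hasDerivAt_iff_tendsto_slope] at h ⊢
  have hconj : Tendsto (fun y : ℂ => (starRingEnd ℂ) y) (𝓝[≠] w) (𝓝[≠] ((starRingEnd ℂ) w)) := by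
    refine tendsto_nhdsWithin_of_tendsto_nhds_of_eventually_within _
      ((Complex.continuous_conj.tendsto w).mono_left nhdsWithin_le_nhds) ?_
    refine Filter.eventually_of_mem self_mem_nhdsWithin fun y hy => ?_
    simp only [Set.mem_compl_iff, Set.mem_singleton_iff] at hy ⊢
    exact fun h' => hy (star_injective h')
  have := ((Complex.continuous_conj.tendsto d).comp h).comp hconj
  apply this.congr
  intro y
  simp only [Function.comp_apply, slope, vsub_eq_sub, ← map_sub, smul_eq_mul, map_mul,
    map_inv₀, Complex.conj_conj]

lemma differentiableAt_conj_comp {G : ℂ → ℂ} {w : ℂ}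
    (h : DifferentiableAt ℂ G ((starRingEnd ℂ) w)) :
    DifferentiableAt ℂ (fun y => (starRingEnd ℂ) (G ((starRingEnd ℂ) y))) w :=
  (hasDerivAt_conj_comp h.hasDerivAt).differentiableAt

lemma abs_sub_le_of_mem_uIoc {a b x : ℝ} (h : x ∈ Set.uIoc a b) : |x - a| ≤ |b - a| := by
  rcases Set.mem_uIoc.mp h with ⟨h1, h2⟩ | ⟨h1, h2⟩
  · rw [_root_.abs_of_nonneg (by linarith), _root_.abs_of_nonneg (by linarith)]; linarith
  · rw [_root_.abs_of_nonpos (by linarith), _root_.abs_of_nonpos (by linarith)]; linarith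

lemma Ioo_min_max_subset_uIcc {a b : ℝ} : Set.Ioo (min a b) (max a b) ⊆ Set.uIcc a b :=
  fun _ hx => ⟨hx.1.le, hx.2.le⟩

lemma morera_aux {f : ℂ → ℂ} {U : Set ℂ} (hU : IsOpen U) (hc : ContinuousOn f U)
    (hd : ∀ w ∈ U, w.im ≠ 0 → DifferentiableAt ℂ f w) :
    ∀ p ∈ U, DifferentiableAt ℂ f p := by
  intro p hp
  rcases ne_or_eq p.im 0 with hpim | hpim
  · exact hd p hp hpim
  obtain ⟨r, hr0, hrU⟩ := Metric.isOpen_iff.mp hU p hp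
  set δ := r / 2 with hδ
  have hδ0 : 0 < δ := by positivity
  set A : Set ℝ := Ioo (p.re - δ) (p.re + δ) with hA
  set B : Set ℝ := Ioo (-δ) δ with hB
  set V : Set ℂ := A ×ℂ B with hV
  have h0B : (0 : ℝ) ∈ B := by constructor <;> simp [hB, hδ0]
  have hmemV : ∀ {x c : ℝ}, x ∈ A → c ∈ B → (x + c * I : ℂ) ∈ V := by
    intro x c hx hc'
    rw [hV, Complex.mem_reProdIm]
    constructor <;> simp [hx, hc']
  have hVU : V ⊆ U := by
    intro w hw
    rw [hV, Complex.mem_reProdIm] at hw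
    apply hrU
    rw [Metric.mem_ball, Complex.dist_eq]
    calc ‖w - p‖ ≤ |(w - p).re| + |(w - p).im| :=
          Complex.norm_le_abs_re_add_abs_im _
    _ < δ + δ := by
        have h1 : |w.re - p.re| < δ := abs_lt.2 ⟨by linarith [hw.1.1], by linarith [hw.1.2]⟩
        have h2 : |w.im - p.im| < δ := by
          rw [hpim, sub_zero]; exact abs_lt.2 ⟨hw.2.1, hw.2.2⟩
        simpa [Complex.sub_re, Complex.sub_im] using add_lt_add h1 h2
    _ = r := by rw [hδ]; ring
  have hVopen : IsOpen V := IsOpen.reProdIm isOpen_Ioo isOpen_Ioo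
  have hpV : p ∈ V := by
    rw [hV, Complex.mem_reProdIm, hpim]
    exact ⟨⟨by linarith, by linarith⟩, h0B⟩
  have hH : ∀ {x₁ x₂ c : ℝ}, x₁ ∈ A → x₂ ∈ A → c ∈ B →
      IntervalIntegrable (fun x : ℝ => f (x + c * I)) volume x₁ x₂ := by
    intro x₁ x₂ c h1 h2 h3
    apply ContinuousOn.intervalIntegrable
    apply (hc.mono hVU).comp
      (Continuous.continuousOn (Complex.continuous_ofReal.add continuous_const))
    intro x hx
    exact hmemV (Set.ordConnected_Ioo.uIcc_subset h1 h2 hx) h3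
  have hVert : ∀ {c y₁ y₂ : ℝ}, c ∈ A → y₁ ∈ B → y₂ ∈ B →
      IntervalIntegrable (fun y : ℝ => f (c + y * I)) volume y₁ y₂ := by
    intro c y₁ y₂ h1 h2 h3
    apply ContinuousOn.intervalIntegrable
    apply (hc.mono hVU).comp (Continuous.continuousOn
      (continuous_const.add (Complex.continuous_ofReal.mul continuous_const)))
    intro y hy
    exact hmemV h1 (Set.ordConnected_Ioo.uIcc_subset h2 h3 hy)
  have R0 : ∀ {x₁ x₂ c : ℝ}, x₁ ∈ A → x₂ ∈ A → c ∈ B →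
      (∫ x : ℝ in x₁..x₂, f x) - (∫ x : ℝ in x₁..x₂, f (x + c * I)) +
        I * (∫ y : ℝ in (0:ℝ)..c, f (x₂ + y * I)) -
        I * ∫ y : ℝ in (0:ℝ)..c, f (x₁ + y * I) = 0 := by
    intro x₁ x₂ c h1 h2 h3
    have key := Complex.integral_boundary_rect_eq_zero_of_continuousOn_of_differentiableOn f
      (x₁ : ℂ) ((x₂ : ℂ) + (c : ℂ) * I) ?_ ?_
    · simpa [smul_eq_mul] using key
    · apply (hc.mono hVU).mono
      intro w hw
      rw [Complex.mem_reProdIm] at hw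
      simp only [Complex.ofReal_re, Complex.ofReal_im, Complex.add_re, Complex.add_im,
        Complex.mul_re, Complex.mul_im, Complex.I_re, Complex.I_im] at hw
      have hwre : w.re ∈ Set.uIcc x₁ x₂ := by simpa using hw.1
      have hwim : w.im ∈ Set.uIcc (0:ℝ) c := by simpa using hw.2
      rw [hV, Complex.mem_reProdIm]
      exact ⟨Set.ordConnected_Ioo.uIcc_subset h1 h2 hwre,
        Set.ordConnected_Ioo.uIcc_subset h0B h3 hwim⟩
    · intro w hw
      rw [Complex.mem_reProdIm] at hw
      simp only [Complex.ofReal_re, Complex.ofReal_im, Complex.add_re, Complex.add_im,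
        Complex.mul_re, Complex.mul_im, Complex.I_re, Complex.I_im] at hw
      have hwre : w.re ∈ Set.Ioo (min x₁ x₂) (max x₁ x₂) := by simpa using hw.1
      have hwim : w.im ∈ Set.Ioo (min (0:ℝ) c) (max (0:ℝ) c) := by simpa using hw.2
      have hwV : w ∈ V := by
        rw [hV, Complex.mem_reProdIm]
        exact ⟨Set.ordConnected_Ioo.uIcc_subset h1 h2 (Ioo_min_max_subset_uIcc hwre),
          Set.ordConnected_Ioo.uIcc_subset h0B h3 (Ioo_min_max_subset_uIcc hwim)⟩
      refine (hd w (hVU hwV) ?_).differentiableWithinAt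
      intro h0
      rw [h0] at hwim
      have h1 := hwim.1
      have h2 := hwim.2
      rw [min_lt_iff] at h1
      rw [lt_max_iff] at h2
      rcases h1 with h1 | h1 <;> rcases h2 with h2 | h2 <;> linarith
  set F : ℂ → ℂ := fun w => (∫ x : ℝ in p.re..w.re, f x) +
    I * ∫ y : ℝ in (0:ℝ)..w.im, f (w.re + y * I) with hF
  have hL : ∀ w ∈ V, ∀ w' ∈ V, F w' - F w =
      (∫ x : ℝ in w.re..w'.re, f (x + w.im * I)) +
        I * ∫ y : ℝ in w.im..w'.im, f (w'.re + y * I) := by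
    intro w hw w' hw'
    rw [hV, Complex.mem_reProdIm] at hw hw'
    have hpA : p.re ∈ A := by
      simp only [hA, Set.mem_Ioo]
      constructor <;> linarith
    have e1 : (∫ x : ℝ in p.re..w.re, f (x : ℝ)) + (∫ x : ℝ in w.re..w'.re, f (x : ℝ)) =
        ∫ x : ℝ in p.re..w'.re, f (x : ℝ) := by
      apply intervalIntegral.integral_add_adjacent_intervals
      · simpa using hH hpA hw.1 h0B
      · simpa using hH hw.1 hw'.1 h0B
    have e2 : (∫ y : ℝ in (0:ℝ)..w.im, f (w'.re + y * I)) +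
        (∫ y : ℝ in w.im..w'.im, f (w'.re + y * I)) =
        ∫ y : ℝ in (0:ℝ)..w'.im, f (w'.re + y * I) := by
      apply intervalIntegral.integral_add_adjacent_intervals
      · exact hVert hw'.1 h0B hw.2
      · exact hVert hw'.1 hw.2 hw'.2
    have e3 := R0 hw.1 hw'.1 hw.2
    simp only [hF]
    linear_combination e3 - e1 - I * e2
  have hFd : ∀ w ∈ V, HasDerivAt F (f w) w := by
    intro w hw
    rw [hasDerivAt_iff_isLittleO, Asymptotics.isLittleO_iff]
    intro ε hε
    have hcw : ContinuousAt f w := hc.continuousAt (hU.mem_nhds (hVU hw))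
    obtain ⟨η, hη0, hηball⟩ := Metric.continuousAt_iff.mp hcw (ε/2) (by positivity)
    obtain ⟨ρ, hρ0, hρV⟩ := Metric.isOpen_iff.mp hVopen w hw
    have hσ0 : 0 < min (η/3) ρ := lt_min (by positivity) hρ0
    filter_upwards [Metric.ball_mem_nhds w hσ0] with w' hw'
    have hw'V : w' ∈ V := hρV (Metric.ball_subset_ball (min_le_right _ _) hw')
    have hdist : dist w' w < η / 3 := lt_of_lt_of_le (Metric.mem_ball.mp hw') (min_le_left _ _)
    have habs : ‖w' - w‖ < η / 3 := by rwa [Complex.dist_eq] at hdist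
    have hre : |w'.re - w.re| ≤ ‖w' - w‖ := by
      simpa [Complex.sub_re] using Complex.abs_re_le_norm (w' - w)
    have him : |w'.im - w.im| ≤ ‖w' - w‖ := by
      simpa [Complex.sub_im] using Complex.abs_im_le_norm (w' - w)
    have hid := hL w hw w' hw'V
    rw [hV, Complex.mem_reProdIm] at hw hw'V
    have c1 : ((w'.re - w.re : ℝ) : ℂ) * f w = ∫ x : ℝ in w.re..w'.re, f w := by
      rw [intervalIntegral.integral_const, Complex.real_smul]
    have c2 : ((w'.im - w.im : ℝ) : ℂ) * f w = ∫ y : ℝ in w.im..w'.im, f w := by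
      rw [intervalIntegral.integral_const, Complex.real_smul]
    have hsub : w' - w = ((w'.re - w.re : ℝ) : ℂ) + ((w'.im - w.im : ℝ) : ℂ) * I := by
      simp [Complex.ext_iff]
    have hint1 : IntervalIntegrable (fun x : ℝ => f (x + w.im * I)) volume w.re w'.re :=
      hH hw.1 hw'V.1 hw.2
    have hint2 : IntervalIntegrable (fun y : ℝ => f (w'.re + y * I)) volume w.im w'.im :=
      hVert hw'V.1 hw.2 hw'V.2
    have hN : F w' - F w - (w' - w) • f w =
        (∫ x : ℝ in w.re..w'.re, (f (x + w.im * I) - f w)) +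
          I * ∫ y : ℝ in w.im..w'.im, (f (w'.re + y * I) - f w) := by
      rw [intervalIntegral.integral_sub hint1 intervalIntegrable_const,
        intervalIntegral.integral_sub hint2 intervalIntegrable_const]
      rw [smul_eq_mul, hid, hsub]
      ring_nf
      rw [← c1, ← c2]
      ring
    have b1 : ‖∫ x : ℝ in w.re..w'.re, (f (x + w.im * I) - f w)‖ ≤ (ε/2) * |w'.re - w.re| := by
      apply intervalIntegral.norm_integral_le_of_norm_le_const
      intro x hx
      have hx' : |x - w.re| ≤ |w'.re - w.re| := abs_sub_le_of_mem_uIoc hx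
      have : dist ((x : ℂ) + (w.im : ℂ) * I) w < η := by
        rw [Complex.dist_eq]
        have : ((x : ℂ) + (w.im : ℂ) * I) - w = ((x - w.re : ℝ) : ℂ) := by
          simp [Complex.ext_iff]
        rw [this, Complex.norm_real, Real.norm_eq_abs]
        calc |x - w.re| ≤ |w'.re - w.re| := hx'
        _ ≤ ‖w' - w‖ := hre
        _ < η / 3 := habs
        _ < η := by linarith
      exact le_of_lt (by simpa [dist_eq_norm] using hηball this)
    have b2 : ‖∫ y : ℝ in w.im..w'.im, (f (w'.re + y * I) - f w)‖ ≤ (ε/2) * |w'.im - w.im| := by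
      apply intervalIntegral.norm_integral_le_of_norm_le_const
      intro y hy
      have hy' : |y - w.im| ≤ |w'.im - w.im| := abs_sub_le_of_mem_uIoc hy
      have : dist ((w'.re : ℂ) + (y : ℂ) * I) w < η := by
        rw [Complex.dist_eq]
        have heq : ((w'.re : ℂ) + (y : ℂ) * I) - w =
            ((w'.re - w.re : ℝ) : ℂ) + ((y - w.im : ℝ) : ℂ) * I := by
          simp [Complex.ext_iff]
        rw [heq]
        calc ‖((w'.re - w.re : ℝ) : ℂ) + ((y - w.im : ℝ) : ℂ) * I‖ ≤
            |w'.re - w.re| + |y - w.im| := by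
              simpa using Complex.norm_le_abs_re_add_abs_im
                (((w'.re - w.re : ℝ) : ℂ) + ((y - w.im : ℝ) : ℂ) * I)
        _ ≤ ‖w' - w‖ + ‖w' - w‖ := by
            have := hy'.trans him
            linarith [hre]
        _ < η / 3 + η / 3 := by linarith
        _ < η := by linarith
      exact le_of_lt (by simpa [dist_eq_norm] using hηball this)
    calc ‖F w' - F w - (w' - w) • f w‖ ≤
        ‖∫ x : ℝ in w.re..w'.re, (f (x + w.im * I) - f w)‖ +
          ‖I * ∫ y : ℝ in w.im..w'.im, (f (w'.re + y * I) - f w)‖ := by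
          rw [hN]; exact norm_add_le _ _
    _ ≤ (ε/2) * |w'.re - w.re| + (ε/2) * |w'.im - w.im| := by
        rw [norm_mul, Complex.norm_I, one_mul]
        exact add_le_add b1 b2
    _ ≤ (ε/2) * ‖w' - w‖ + (ε/2) * ‖w' - w‖ := by
        have h1 : (ε/2) * |w'.re - w.re| ≤ (ε/2) * ‖w' - w‖ :=
          mul_le_mul_of_nonneg_left hre (by positivity)
        have h2 : (ε/2) * |w'.im - w.im| ≤ (ε/2) * ‖w' - w‖ :=
          mul_le_mul_of_nonneg_left him (by positivity)
        linarith
    _ = ε * ‖w' - w‖ := by ring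
  have hFdiff : DifferentiableOn ℂ F V := fun w hw =>
    ((hFd w hw).differentiableAt).differentiableWithinAt
  have hFanal : AnalyticOnNhd ℂ F V := hFdiff.analyticOnNhd hVopen
  have hderiv : AnalyticOnNhd ℂ (deriv F) V := hFanal.deriv
  have hAp : AnalyticAt ℂ (deriv F) p := hderiv p hpV
  have heq : deriv F =ᶠ[𝓝 p] f := by
    filter_upwards [hVopen.mem_nhds hpV] with w hw
    exact (hFd w hw).deriv
  exact hAp.differentiableAt.congr_of_eventuallyEq heq.symm

lemma neg_mem_uIcc_zero {a x : ℝ} (h : x ∈ Set.uIcc 0 a) : -x ∈ Set.uIcc 0 (-a) := by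
  rcases Set.mem_uIcc.mp h with ⟨h1, h2⟩ | ⟨h1, h2⟩
  · exact Set.mem_uIcc.mpr (Or.inr ⟨by linarith, by linarith⟩)
  · exact Set.mem_uIcc.mpr (Or.inl ⟨by linarith, by linarith⟩)

lemma strip_uniq_pos {z : ℂ} (hzre : z.re = 0) (hzim : 0 < z.im) {k : ℂ → ℂ}
    (hc : ContinuousOn k (hStrip z)) (hd : DifferentiableOn ℂ k (interior (hStrip z)))
    (h0 : ∀ t : ℝ, k t = 0) : k z = 0 := by
  have hminmax : Set.Ioo (min 0 z.im) (max 0 z.im) = Set.Ioo 0 z.im := by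
    rw [min_eq_left hzim.le, max_eq_right hzim.le]
  have hmemint : ∀ {v : ℂ}, 0 < v.im → v.im < z.im → v ∈ interior (hStrip z) := by
    intro v h1 h2
    rw [mem_interior_hStrip, hminmax]
    exact ⟨h1, h2⟩
  have hmemstrip : ∀ {v : ℂ}, 0 ≤ v.im → v.im ≤ z.im → v ∈ hStrip z := by
    intro v h1 h2
    show v.im ∈ Set.uIcc 0 z.im
    rw [Set.uIcc_of_le hzim.le]
    exact ⟨h1, h2⟩
  set Ω : Set ℂ := {w : ℂ | w.im ∈ Set.Ioo (-z.im) z.im} with hΩ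
  have hΩopen : IsOpen Ω := by
    have : Ω = Set.univ ×ℂ Set.Ioo (-z.im) z.im := by
      ext w; simp [hΩ, Complex.mem_reProdIm]
    rw [this]; exact IsOpen.reProdIm isOpen_univ isOpen_Ioo
  set K : ℂ → ℂ := fun w => if 0 ≤ w.im then k w else (starRingEnd ℂ) (k ((starRingEnd ℂ) w))
    with hK
  have hcont : ContinuousOn K Ω := by
    intro w hw
    simp only [hΩ, Set.mem_setOf_eq, Set.mem_Ioo] at hw
    rcases lt_trichotomy w.im 0 with hneg | hzero | hpos
    · have hck : ContinuousAt k ((starRingEnd ℂ) w) := by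
        apply hc.continuousAt
        rw [mem_nhds_iff]
        exact ⟨interior (hStrip z), interior_subset, isOpen_interior,
          hmemint (by simp only [Complex.conj_im]; linarith)
            (by simp only [Complex.conj_im]; linarith)⟩
      have hca : ContinuousAt (fun y => (starRingEnd ℂ) (k ((starRingEnd ℂ) y))) w :=
        Complex.continuous_conj.continuousAt.comp
          (hck.comp Complex.continuous_conj.continuousAt)
      have heq : (fun y => (starRingEnd ℂ) (k ((starRingEnd ℂ) y))) =ᶠ[𝓝 w] K := by
        filter_upwards [(isOpen_lt Complex.continuous_im continuous_const).mem_nhds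
          (show w ∈ {v : ℂ | v.im < 0} from hneg)] with v hv
        simp only [hK, if_neg (not_le.mpr hv)]
      exact (hca.congr heq).continuousWithinAt
    · have hwstrip : w ∈ hStrip z := hmemstrip (le_of_eq hzero.symm) (by linarith)
      have hwc : (starRingEnd ℂ) w = w := Complex.ext (by simp) (by simp [hzero])
      have hkw : k w = 0 := by
        have : w = ((w.re : ℝ) : ℂ) := Complex.ext (by simp) (by simp [hzero])
        rw [this]; exact h0 w.re
      have hKw : K w = 0 := by simp only [hK, if_pos (le_of_eq hzero.symm), hkw]
      rw [Metric.continuousWithinAt_iff]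
      intro ε hε
      obtain ⟨δ, hδ0, hδ⟩ := Metric.continuousWithinAt_iff.mp (hc w hwstrip) ε hε
      refine ⟨δ, hδ0, ?_⟩
      intro v hv hdv
      simp only [hΩ, Set.mem_setOf_eq, Set.mem_Ioo] at hv
      rcases le_or_gt 0 v.im with h0v | h0v
      · have hvs : v ∈ hStrip z := hmemstrip h0v hv.2.le
        have hlt := hδ hvs hdv
        rw [hkw, dist_zero_right] at hlt
        have hKv : K v = k v := by simp only [hK]; rw [if_pos h0v]
        rw [hKv, hKw, dist_zero_right]
        exact hlt
      · have hcv : (starRingEnd ℂ) v ∈ hStrip z :=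
          hmemstrip (by simp only [Complex.conj_im]; linarith)
            (by simp only [Complex.conj_im]; linarith [hv.1])
        have hdcv : dist ((starRingEnd ℂ) v) w < δ := by
          rw [← hwc, Complex.dist_eq, ← map_sub, Complex.norm_conj, ← Complex.dist_eq]
          exact hdv
        have hkcv := hδ hcv hdcv
        rw [hkw, dist_zero_right] at hkcv
        have hKv : K v = (starRingEnd ℂ) (k ((starRingEnd ℂ) v)) := by
          simp only [hK, if_neg (not_le.mpr h0v)]
        rw [hKv, hKw, dist_zero_right, RCLike.norm_conj]
        exact hkcv
    · have hck : ContinuousAt k w := by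
        apply hc.continuousAt
        rw [mem_nhds_iff]
        exact ⟨interior (hStrip z), interior_subset, isOpen_interior,
          hmemint hpos (by linarith)⟩
      have heq : k =ᶠ[𝓝 w] K := by
        filter_upwards [(isOpen_lt continuous_const Complex.continuous_im).mem_nhds
          (show w ∈ {v : ℂ | 0 < v.im} from hpos)] with v hv
        simp only [hK, if_pos hv.le]
      exact (hck.congr heq).continuousWithinAt
  have hdiffoff : ∀ w ∈ Ω, w.im ≠ 0 → DifferentiableAt ℂ K w := by
    intro w hw hne
    simp only [hΩ, Set.mem_setOf_eq, Set.mem_Ioo] at hw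
    rcases hne.lt_or_gt with hneg | hpos
    · have hdk : DifferentiableAt ℂ k ((starRingEnd ℂ) w) :=
        hd.differentiableAt (isOpen_interior.mem_nhds
          (hmemint (by simp only [Complex.conj_im]; linarith)
            (by simp only [Complex.conj_im]; linarith)))
      apply (differentiableAt_conj_comp hdk).congr_of_eventuallyEq
      filter_upwards [(isOpen_lt Complex.continuous_im continuous_const).mem_nhds
        (show w ∈ {v : ℂ | v.im < 0} from hneg)] with v hv
      simp only [hK, if_neg (not_le.mpr hv)]
    · have hdk : DifferentiableAt ℂ k w :=
        hd.differentiableAt (isOpen_interior.mem_nhds (hmemint hpos (by linarith)))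
      apply hdk.congr_of_eventuallyEq
      filter_upwards [(isOpen_lt continuous_const Complex.continuous_im).mem_nhds
        (show w ∈ {v : ℂ | 0 < v.im} from hpos)] with v hv
      simp only [hK, if_pos hv.le]
  have hKdiff := morera_aux hΩopen hcont hdiffoff
  have hKdiffOn : DifferentiableOn ℂ K Ω := fun w hw => (hKdiff w hw).differentiableWithinAt
  have hanal : AnalyticOnNhd ℂ K Ω := hKdiffOn.analyticOnNhd hΩopen
  have hpre : IsPreconnected Ω := by
    apply Convex.isPreconnected
    have : Ω = Complex.imLm ⁻¹' Set.Ioo (-z.im) z.im := rfl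
    rw [this]
    exact (convex_Ioo _ _).linear_preimage _
  have h0mem : (0 : ℂ) ∈ Ω := by
    simp only [hΩ, Set.mem_setOf_eq, Complex.zero_im, Set.mem_Ioo]
    constructor <;> linarith
  have hfreq : ∃ᶠ v in 𝓝[≠] (0 : ℂ), K v = 0 := by
    rw [Filter.frequently_iff]
    intro Uf hUf
    obtain ⟨ε, hε, hball⟩ := Metric.mem_nhdsWithin_iff.mp hUf
    refine ⟨((ε / 2 : ℝ) : ℂ), hball ⟨?_, ?_⟩, ?_⟩
    · rw [Metric.mem_ball, Complex.dist_eq, sub_zero, Complex.norm_real, Real.norm_eq_abs,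
        _root_.abs_of_pos (by positivity)]
      linarith
    · simp only [Set.mem_compl_iff, Set.mem_singleton_iff]
      exact Complex.ofReal_ne_zero.mpr (by positivity)
    · simp only [hK, Complex.ofReal_im, le_refl, if_pos]
      exact h0 _
  have hzero := hanal.eqOn_zero_of_preconnected_of_frequently_eq_zero hpre h0mem hfreq
  set v : ℕ → ℂ := fun n => ((1 - 1 / (n + 1) : ℝ)) • z with hv
  have hr : ∀ n : ℕ, 0 ≤ (1 - 1 / (n + 1 : ℝ)) ∧ (1 - 1 / (n + 1 : ℝ)) < 1 := by
    intro n
    have h1 : (0 : ℝ) < n + 1 := by positivity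
    constructor
    · have : 1 / (n + 1 : ℝ) ≤ 1 := by
        rw [div_le_one h1]
        linarith [Nat.cast_nonneg (α := ℝ) n]
      linarith
    · have : 0 < 1 / (n + 1 : ℝ) := by positivity
      linarith
  have hvim : ∀ n, (v n).im = (1 - 1 / (n + 1 : ℝ)) * z.im := by
    intro n
    rw [show v n = ((1 - 1 / (n + 1) : ℝ)) • z from rfl, Complex.smul_im, smul_eq_mul]
  have hkvz : ∀ n, k (v n) = 0 := by
    intro n
    have h1 := (hr n).1
    have h2 := (hr n).2
    have him1 : 0 ≤ (v n).im := by rw [hvim n]; exact mul_nonneg h1 hzim.le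
    have him2 : (v n).im < z.im := by rw [hvim n]; nlinarith
    have hmem : v n ∈ Ω := by
      simp only [hΩ, Set.mem_setOf_eq, Set.mem_Ioo]
      constructor <;> nlinarith
    have := hzero hmem
    simp only [hK, Pi.zero_apply, if_pos him1] at this
    exact this
  have htend : Tendsto v atTop (𝓝 z) := by
    have h1 : Tendsto (fun n : ℕ => (1 - 1 / (n + 1) : ℝ)) atTop (𝓝 1) := by
      simpa using (tendsto_const_nhds (x := (1:ℝ))).sub tendsto_one_div_add_atTop_nhds_zero_nat
    simpa only [one_smul] using h1.smul_const z
  have htendW : Tendsto v atTop (𝓝[hStrip z] z) := by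
    rw [tendsto_nhdsWithin_iff]
    refine ⟨htend, Filter.Eventually.of_forall fun n => ?_⟩
    have h1 := (hr n).1
    have h2 := (hr n).2
    refine hmemstrip ?_ ?_
    · rw [hvim n]; exact mul_nonneg h1 hzim.le
    · rw [hvim n]; nlinarith
  have hczz : Tendsto (fun n => k (v n)) atTop (𝓝 (k z)) :=
    ((hc z (hmemstrip hzim.le le_rfl)).tendsto).comp htendW
  have hfinal : Tendsto (fun _ : ℕ => (0 : ℂ)) atTop (𝓝 (k z)) := hczz.congr hkvz
  exact (tendsto_nhds_unique hfinal tendsto_const_nhds)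

lemma strip_uniq {z : ℂ} (hzre : z.re = 0) {k : ℂ → ℂ}
    (hc : ContinuousOn k (hStrip z)) (hd : DifferentiableOn ℂ k (interior (hStrip z)))
    (h0 : ∀ t : ℝ, k t = 0) : k z = 0 := by
  rcases lt_trichotomy z.im 0 with hneg | hzero | hpos
  · -- apply positive case to conj z and conj ∘ k ∘ conj
    have hmaps : ∀ {v : ℂ}, v ∈ hStrip ((starRingEnd ℂ) z) → (starRingEnd ℂ) v ∈ hStrip z := by
      intro v hv
      have := neg_mem_uIcc_zero (a := (starRingEnd ℂ) z |>.im) hv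
      show ((starRingEnd ℂ) v).im ∈ Set.uIcc 0 z.im
      simpa [Complex.conj_im] using this
    have h1 := strip_uniq_pos (z := (starRingEnd ℂ) z) (by simp [hzre])
      (by simp only [Complex.conj_im]; linarith)
      (k := fun y => (starRingEnd ℂ) (k ((starRingEnd ℂ) y))) ?_ ?_ ?_
    · have : (starRingEnd ℂ) (k z) = 0 := by simpa using h1
      simpa using congrArg (starRingEnd ℂ) this
    · apply Complex.continuous_conj.comp_continuousOn
      apply hc.comp Complex.continuous_conj.continuousOn
      intro v hv
      exact hmaps hv
    · intro y hy
      rw [mem_interior_hStrip] at hy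
      have hy' : (starRingEnd ℂ) y ∈ interior (hStrip z) := by
        rw [mem_interior_hStrip]
        simp only [Complex.conj_im]
        rcases hy with ⟨ha, hb⟩
        simp only [Complex.conj_im, min_def, max_def] at ha hb ⊢
        constructor
        · split <;> split at ha <;> split at hb <;> linarith
        · split <;> split at ha <;> split at hb <;> linarith
      exact (differentiableAt_conj_comp
        (hd.differentiableAt (isOpen_interior.mem_nhds hy'))).differentiableWithinAt
    · intro t
      simp [Complex.conj_ofReal, h0 t]
  · have hz0 : z = ((0 : ℝ) : ℂ) := Complex.ext (by simp [hzre]) (by simp [hzero])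
    rw [hz0]
    exact h0 0
  · exact strip_uniq_pos hzre hpos hc hd h0

/-- For a strongly continuous one-parameter unitary group `u` on a Hilbert space and a purely
imaginary `z`, the analytic continuation `u_z` is symmetric:
`⟨u_z a, b⟩ = ⟨a, u_z b⟩` for all `a, b ∈ D(u_z)`, i.e. `u_z ⊆ (u_z)*`. -/
theorem unitary_cont_symmetric
    {H : Type*} [NormedAddCommGroup H] [InnerProductSpace ℂ H] [CompleteSpace H]
    (u : ℝ → H →L[ℂ] H) (hu : IsOneParamRep u)
    (huni : ∀ (t : ℝ) (x y : H), (inner ℂ (u t x) (u t y) : ℂ) = inner ℂ x y)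
    (z : ℂ) (hz : z.re = 0) (a b a' b' : H)
    (ha : HasContVal u z a a') (hb : HasContVal u z b b') :
    (inner ℂ a' b : ℂ) = inner ℂ a b' := by
  obtain ⟨f, hfc, hfd, hfr, hfz⟩ := ha
  obtain ⟨g, hgc, hgd, hgr, hgz⟩ := hb
  set G : ℂ → ℂ := fun w => inner ℂ a (g (-w)) with hG
  set k : ℂ → ℂ := fun y => (starRingEnd ℂ) (G ((starRingEnd ℂ) y)) - inner ℂ b (f y) with hk
  have hmaps : ∀ {v : ℂ}, v ∈ hStrip z → (starRingEnd ℂ) v ∈ hStrip ((starRingEnd ℂ) z) := by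
    intro v hv
    show ((starRingEnd ℂ) v).im ∈ Set.uIcc 0 ((starRingEnd ℂ) z).im
    simpa [Complex.conj_im] using neg_mem_uIcc_zero (a := z.im) hv
  have hmaps2 : ∀ {v : ℂ}, v ∈ hStrip ((starRingEnd ℂ) z) → -v ∈ hStrip z := by
    intro v hv
    show (-v).im ∈ Set.uIcc 0 z.im
    have := neg_mem_uIcc_zero (a := ((starRingEnd ℂ) z).im) hv
    simpa [Complex.conj_im] using this
  have hGc : ContinuousOn G (hStrip ((starRingEnd ℂ) z)) := by
    apply ((innerSL ℂ a).continuous.comp_continuousOn)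
    apply hgc.comp continuous_neg.continuousOn
    intro v hv
    exact hmaps2 hv
  have hkc : ContinuousOn k (hStrip z) := by
    apply ContinuousOn.sub
    · apply Complex.continuous_conj.comp_continuousOn
      apply hGc.comp Complex.continuous_conj.continuousOn
      intro v hv
      exact hmaps hv
    · exact (innerSL ℂ b).continuous.comp_continuousOn hfc
  have hkd : DifferentiableOn ℂ k (interior (hStrip z)) := by
    intro y hy
    have hy' : -((starRingEnd ℂ) y) ∈ interior (hStrip z) := by
      rw [mem_interior_hStrip] at hy ⊢
      simpa [Complex.neg_im, Complex.conj_im] using hy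
    have hg' : DifferentiableAt ℂ g (-((starRingEnd ℂ) y)) :=
      hgd.differentiableAt (isOpen_interior.mem_nhds hy')
    have hGd : DifferentiableAt ℂ G ((starRingEnd ℂ) y) := by
      have := ((innerSL ℂ a).differentiableAt.comp (-((starRingEnd ℂ) y)) hg'
        |>.comp ((starRingEnd ℂ) y) differentiableAt_id.neg)
      exact this
    have h1 : DifferentiableAt ℂ (fun y => (starRingEnd ℂ) (G ((starRingEnd ℂ) y))) y :=
      differentiableAt_conj_comp hGd
    have h2 : DifferentiableAt ℂ (fun y => (inner ℂ b (f y) : ℂ)) y := by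
      have hf' : DifferentiableAt ℂ f y := hfd.differentiableAt (isOpen_interior.mem_nhds hy)
      have := (innerSL ℂ b).differentiableAt.comp y hf'
      exact this
    exact (h1.sub h2).differentiableWithinAt
  have hid : ∀ t : ℝ, u t ((u (-t)) b) = b := by
    intro t
    rw [← ContinuousLinearMap.comp_apply, ← hu.map_add, add_neg_cancel, hu.map_zero,
      ContinuousLinearMap.id_apply]
  have h0 : ∀ t : ℝ, k t = 0 := by
    intro t
    simp only [hk, hG, Complex.conj_ofReal]
    rw [show -((t : ℝ) : ℂ) = ((-t : ℝ) : ℂ) by push_cast; ring]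
    rw [hgr (-t), hfr t]
    rw [inner_conj_symm]
    rw [show (inner ℂ (u (-t) b) a : ℂ) = inner ℂ (u t (u (-t) b)) (u t a) from (huni t _ _).symm]
    rw [hid t]
    ring
  have hfin := strip_uniq hz hkc hkd h0
  simp only [hk, hG] at hfin
  have hzc : -((starRingEnd ℂ) z) = z := Complex.ext (by simp [hz]) (by simp)
  rw [hzc, hgz, hfz, sub_eq_zero, inner_conj_symm] at hfin
  have := congrArg (starRingEnd ℂ) hfin
  rw [inner_conj_symm, inner_conj_symm] at this
  exact this.symm
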